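/- The dicyclic group Q₁₂ of order 12 admits a small Mathieu representation V with dim V^{Q₁₂} = 4. -/

import Mathlib

/-- The character value of the small Mathieu representation at an element of the given order. -/
def mathieuCharValue : ℕ → ℂ
  | 1 => 12
  | 2 => 4
  | 3 => 3
  | 4 => 4
  | 5 => 2
  | 6 => 1
  | 8 => 2
  | 11 => 1
  | _ => 0

/-- A representation is a small Mathieu representation if it is 12-dimensional, every group
element has order in {1,2,3,4,5,6,8,11}, and the character at `g` depends only on the order
of `g`, with the values of the permutation character of `M₁₁` acting on 12 points. -/
def IsSmallMathieuRep {G : Type*} [Group G] {V : Type*} [AddCommGroup V] [Module ℂ V]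
    (ρ : Representation ℂ G V) : Prop :=
  Module.finrank ℂ V = 12 ∧
    (∀ g : G, orderOf g ∈ ({1, 2, 3, 4, 5, 6, 8, 11} : Set ℕ)) ∧
    (∀ g : G, LinearMap.trace ℂ V (ρ g) = mathieuCharValue (orderOf g))

/-- `G` admits a small Mathieu representation. -/
def HasSmallMathieuRep (G : Type*) [Group G] : Prop :=
  ∃ (V : Type) (_ : AddCommGroup V) (_ : Module ℂ V) (ρ : Representation ℂ G V),
    IsSmallMathieuRep ρ

/-- `G` admits a small Mathieu representation whose invariant subspace has dimension ≥ 3. -/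
def HasSmallMathieuRep3 (G : Type*) [Group G] : Prop :=
  ∃ (V : Type) (_ : AddCommGroup V) (_ : Module ℂ V) (ρ : Representation ℂ G V),
    IsSmallMathieuRep ρ ∧ 3 ≤ Module.finrank ℂ ρ.invariants

/-- Condition (4): `G` has a small Mathieu representation `V` with `dim V^G ≥ 3`, the 2-Sylow
subgroups of `G` embed into `S₆`, and `G` is not isomorphic to the dicyclic group `Q₁₂`
(realized in Mathlib as `QuaternionGroup 3`). -/
def Condition4 (G : Type*) [Group G] [Fintype G] : Prop :=
  HasSmallMathieuRep3 G ∧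
    (∀ P : Sylow 2 G, ∃ f : P →* Equiv.Perm (Fin 6), Function.Injective f) ∧
    IsEmpty (G ≃* QuaternionGroup 3)

noncomputable section
namespace Q12aux

def ζ : ℂ := (1 + (Real.sqrt 3 : ℂ) * Complex.I) / 2

lemma sqrt3_sq : ((Real.sqrt 3 : ℝ) : ℂ) ^ 2 = 3 := by
  rw [← Complex.ofReal_pow, Real.sq_sqrt (by norm_num)]
  norm_num

lemma hζ2 : ζ ^ 2 = ζ - 1 := by
  unfold ζ
  linear_combination (Complex.I^2/4) * sqrt3_sq + (3/4 : ℂ) * Complex.I_sq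

lemma hζ3 : ζ ^ 3 = -1 := by
  have := hζ2
  calc ζ^3 = ζ^2 * ζ := by ring
  _ = (ζ - 1) * ζ := by rw [this]
  _ = ζ^2 - ζ := by ring
  _ = -1 := by rw [this]; ring

lemma hζ4 : ζ ^ 4 = -ζ := by
  calc ζ^4 = ζ^3 * ζ := by ring
  _ = -ζ := by rw [hζ3]; ring

lemma hζ5 : ζ ^ 5 = 1 - ζ := by
  calc ζ^5 = ζ^3 * ζ^2 := by ring
  _ = 1 - ζ := by rw [hζ3, hζ2]; ring

lemma hζ6 : ζ ^ 6 = 1 := by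
  calc ζ^6 = (ζ^3)^2 := by ring
  _ = 1 := by rw [hζ3]; ring

lemma zim : ζ.im = Real.sqrt 3 / 2 := by
  simp [ζ, Complex.div_im]

lemma zeta_ne_real (r : ℝ) : ζ ≠ (r : ℂ) := by
  intro h
  have := congrArg Complex.im h
  rw [zim, Complex.ofReal_im] at this
  have h3 : (0:ℝ) < Real.sqrt 3 := Real.sqrt_pos.mpr (by norm_num)
  linarith

lemma zeta_ne_one : ζ ≠ 1 := by simpa using zeta_ne_real 1
lemma zeta2_ne_one : ζ^2 ≠ 1 := by
  rw [hζ2]; intro h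
  exact zeta_ne_real 2 (by push_cast; linear_combination h)
lemma zeta4_ne_one : ζ^4 ≠ 1 := by
  rw [hζ4]; intro h
  exact zeta_ne_real (-1) (by push_cast; linear_combination -h)
lemma zeta5_ne_one : ζ^5 ≠ 1 := by
  rw [hζ5]; intro h
  exact zeta_ne_real 0 (by push_cast; linear_combination -h)
lemma neg_one_ne_one : (-1 : ℂ) ≠ 1 := by norm_num

/-- z i = ζ^i for i : ZMod 6 (written as ZMod (2*3) to match QuaternionGroup 3) -/
def z (i : ZMod (2*3)) : ℂ := ζ ^ i.val

lemma zpow_mod (m : ℕ) : ζ ^ (m % 6) = ζ ^ m := by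
  conv_rhs => rw [← Nat.div_add_mod m 6, pow_add, pow_mul, hζ6, one_pow, one_mul]

lemma z_add (i j : ZMod (2*3)) : z (i + j) = z i * z j := by
  unfold z
  rw [ZMod.val_add, zpow_mod, pow_add]

lemma z_zero : z 0 = 1 := by unfold z; norm_num
lemma z_three : z 3 = -1 := by
  show ζ ^ (3 : ZMod (2*3)).val = -1
  rw [show (3 : ZMod (2*3)).val = 3 from rfl, hζ3]



open QuaternionGroup

def mono (c : Fin 12 → ℂ) (s : Fin 12 → Fin 12) : (Fin 12 → ℂ) →ₗ[ℂ] (Fin 12 → ℂ) where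
  toFun v := fun k => c k * v (s k)
  map_add' u v := by funext k; simp [mul_add]
  map_smul' r v := by funext k; simp; ring

def cvec : QuaternionGroup 3 → Fin 12 → ℂ
  | .a i => ![1, 1, 1, 1, z (3*i), z (3*i), z i, z (-i), z (2*i), z (-(2*i)), z (2*i), z (-(2*i))]
  | .xa i => ![1, 1, 1, 1, Complex.I * z (3*i), -(Complex.I * z (3*i)),
      z (-i), -(z i), z (-(2*i)), z (2*i), z (-(2*i)), z (2*i)]

def σv : QuaternionGroup 3 → Fin 12 → Fin 12
  | .a _ => id
  | .xa _ => ![0, 1, 2, 3, 4, 5, 7, 6, 9, 8, 11, 10]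

def ρmap (g : QuaternionGroup 3) : (Fin 12 → ℂ) →ₗ[ℂ] (Fin 12 → ℂ) := mono (cvec g) (σv g)

lemma ρmap_apply (g : QuaternionGroup 3) (v : Fin 12 → ℂ) (k : Fin 12) :
    ρmap g v k = cvec g k * v (σv g k) := rfl

lemma ca0' (i : ZMod (2*3)) : cvec (.a i) ⟨0, by omega⟩ = 1 := rfl
lemma ca0 (i : ZMod (2*3)) : cvec (.a i) 0 = 1 := rfl
lemma cx0' (i : ZMod (2*3)) : cvec (.xa i) ⟨0, by omega⟩ = 1 := rfl
lemma cx0 (i : ZMod (2*3)) : cvec (.xa i) 0 = 1 := rfl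
lemma sx0' (i : ZMod (2*3)) : σv (.xa i) ⟨0, by omega⟩ = 0 := rfl
lemma sx0 (i : ZMod (2*3)) : σv (.xa i) 0 = 0 := rfl
lemma ca1' (i : ZMod (2*3)) : cvec (.a i) ⟨1, by omega⟩ = 1 := rfl
lemma ca1 (i : ZMod (2*3)) : cvec (.a i) 1 = 1 := rfl
lemma cx1' (i : ZMod (2*3)) : cvec (.xa i) ⟨1, by omega⟩ = 1 := rfl
lemma cx1 (i : ZMod (2*3)) : cvec (.xa i) 1 = 1 := rfl
lemma sx1' (i : ZMod (2*3)) : σv (.xa i) ⟨1, by omega⟩ = 1 := rfl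
lemma sx1 (i : ZMod (2*3)) : σv (.xa i) 1 = 1 := rfl
lemma ca2' (i : ZMod (2*3)) : cvec (.a i) ⟨2, by omega⟩ = 1 := rfl
lemma ca2 (i : ZMod (2*3)) : cvec (.a i) 2 = 1 := rfl
lemma cx2' (i : ZMod (2*3)) : cvec (.xa i) ⟨2, by omega⟩ = 1 := rfl
lemma cx2 (i : ZMod (2*3)) : cvec (.xa i) 2 = 1 := rfl
lemma sx2' (i : ZMod (2*3)) : σv (.xa i) ⟨2, by omega⟩ = 2 := rfl
lemma sx2 (i : ZMod (2*3)) : σv (.xa i) 2 = 2 := rfl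
lemma ca3' (i : ZMod (2*3)) : cvec (.a i) ⟨3, by omega⟩ = 1 := rfl
lemma ca3 (i : ZMod (2*3)) : cvec (.a i) 3 = 1 := rfl
lemma cx3' (i : ZMod (2*3)) : cvec (.xa i) ⟨3, by omega⟩ = 1 := rfl
lemma cx3 (i : ZMod (2*3)) : cvec (.xa i) 3 = 1 := rfl
lemma sx3' (i : ZMod (2*3)) : σv (.xa i) ⟨3, by omega⟩ = 3 := rfl
lemma sx3 (i : ZMod (2*3)) : σv (.xa i) 3 = 3 := rfl
lemma ca4' (i : ZMod (2*3)) : cvec (.a i) ⟨4, by omega⟩ = z (3*i) := rfl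
lemma ca4 (i : ZMod (2*3)) : cvec (.a i) 4 = z (3*i) := rfl
lemma cx4' (i : ZMod (2*3)) : cvec (.xa i) ⟨4, by omega⟩ = Complex.I * z (3*i) := rfl
lemma cx4 (i : ZMod (2*3)) : cvec (.xa i) 4 = Complex.I * z (3*i) := rfl
lemma sx4' (i : ZMod (2*3)) : σv (.xa i) ⟨4, by omega⟩ = 4 := rfl
lemma sx4 (i : ZMod (2*3)) : σv (.xa i) 4 = 4 := rfl
lemma ca5' (i : ZMod (2*3)) : cvec (.a i) ⟨5, by omega⟩ = z (3*i) := rfl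
lemma ca5 (i : ZMod (2*3)) : cvec (.a i) 5 = z (3*i) := rfl
lemma cx5' (i : ZMod (2*3)) : cvec (.xa i) ⟨5, by omega⟩ = -(Complex.I * z (3*i)) := rfl
lemma cx5 (i : ZMod (2*3)) : cvec (.xa i) 5 = -(Complex.I * z (3*i)) := rfl
lemma sx5' (i : ZMod (2*3)) : σv (.xa i) ⟨5, by omega⟩ = 5 := rfl
lemma sx5 (i : ZMod (2*3)) : σv (.xa i) 5 = 5 := rfl
lemma ca6' (i : ZMod (2*3)) : cvec (.a i) ⟨6, by omega⟩ = z i := rfl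
lemma ca6 (i : ZMod (2*3)) : cvec (.a i) 6 = z i := rfl
lemma cx6' (i : ZMod (2*3)) : cvec (.xa i) ⟨6, by omega⟩ = z (-i) := rfl
lemma cx6 (i : ZMod (2*3)) : cvec (.xa i) 6 = z (-i) := rfl
lemma sx6' (i : ZMod (2*3)) : σv (.xa i) ⟨6, by omega⟩ = 7 := rfl
lemma sx6 (i : ZMod (2*3)) : σv (.xa i) 6 = 7 := rfl
lemma ca7' (i : ZMod (2*3)) : cvec (.a i) ⟨7, by omega⟩ = z (-i) := rfl
lemma ca7 (i : ZMod (2*3)) : cvec (.a i) 7 = z (-i) := rfl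
lemma cx7' (i : ZMod (2*3)) : cvec (.xa i) ⟨7, by omega⟩ = -(z i) := rfl
lemma cx7 (i : ZMod (2*3)) : cvec (.xa i) 7 = -(z i) := rfl
lemma sx7' (i : ZMod (2*3)) : σv (.xa i) ⟨7, by omega⟩ = 6 := rfl
lemma sx7 (i : ZMod (2*3)) : σv (.xa i) 7 = 6 := rfl
lemma ca8' (i : ZMod (2*3)) : cvec (.a i) ⟨8, by omega⟩ = z (2*i) := rfl
lemma ca8 (i : ZMod (2*3)) : cvec (.a i) 8 = z (2*i) := rfl
lemma cx8' (i : ZMod (2*3)) : cvec (.xa i) ⟨8, by omega⟩ = z (-(2*i)) := rfl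
lemma cx8 (i : ZMod (2*3)) : cvec (.xa i) 8 = z (-(2*i)) := rfl
lemma sx8' (i : ZMod (2*3)) : σv (.xa i) ⟨8, by omega⟩ = 9 := rfl
lemma sx8 (i : ZMod (2*3)) : σv (.xa i) 8 = 9 := rfl
lemma ca9' (i : ZMod (2*3)) : cvec (.a i) ⟨9, by omega⟩ = z (-(2*i)) := rfl
lemma ca9 (i : ZMod (2*3)) : cvec (.a i) 9 = z (-(2*i)) := rfl
lemma cx9' (i : ZMod (2*3)) : cvec (.xa i) ⟨9, by omega⟩ = z (2*i) := rfl
lemma cx9 (i : ZMod (2*3)) : cvec (.xa i) 9 = z (2*i) := rfl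
lemma sx9' (i : ZMod (2*3)) : σv (.xa i) ⟨9, by omega⟩ = 8 := rfl
lemma sx9 (i : ZMod (2*3)) : σv (.xa i) 9 = 8 := rfl
lemma ca10' (i : ZMod (2*3)) : cvec (.a i) ⟨10, by omega⟩ = z (2*i) := rfl
lemma ca10 (i : ZMod (2*3)) : cvec (.a i) 10 = z (2*i) := rfl
lemma cx10' (i : ZMod (2*3)) : cvec (.xa i) ⟨10, by omega⟩ = z (-(2*i)) := rfl
lemma cx10 (i : ZMod (2*3)) : cvec (.xa i) 10 = z (-(2*i)) := rfl
lemma sx10' (i : ZMod (2*3)) : σv (.xa i) ⟨10, by omega⟩ = 11 := rfl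
lemma sx10 (i : ZMod (2*3)) : σv (.xa i) 10 = 11 := rfl
lemma ca11' (i : ZMod (2*3)) : cvec (.a i) ⟨11, by omega⟩ = z (-(2*i)) := rfl
lemma ca11 (i : ZMod (2*3)) : cvec (.a i) 11 = z (-(2*i)) := rfl
lemma cx11' (i : ZMod (2*3)) : cvec (.xa i) ⟨11, by omega⟩ = z (2*i) := rfl
lemma cx11 (i : ZMod (2*3)) : cvec (.xa i) 11 = z (2*i) := rfl
lemma sx11' (i : ZMod (2*3)) : σv (.xa i) ⟨11, by omega⟩ = 10 := rfl
lemma sx11 (i : ZMod (2*3)) : σv (.xa i) 11 = 10 := rfl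

lemma sa (i : ZMod (2*3)) : σv (.a i) = id := rfl
lemma fm0 : (⟨0, by omega⟩ : Fin 12) = 0 := rfl
lemma fm1 : (⟨1, by omega⟩ : Fin 12) = 1 := rfl
lemma fm2 : (⟨2, by omega⟩ : Fin 12) = 2 := rfl
lemma fm3 : (⟨3, by omega⟩ : Fin 12) = 3 := rfl
lemma fm4 : (⟨4, by omega⟩ : Fin 12) = 4 := rfl
lemma fm5 : (⟨5, by omega⟩ : Fin 12) = 5 := rfl
lemma fm6 : (⟨6, by omega⟩ : Fin 12) = 6 := rfl
lemma fm7 : (⟨7, by omega⟩ : Fin 12) = 7 := rfl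
lemma fm8 : (⟨8, by omega⟩ : Fin 12) = 8 := rfl
lemma fm9 : (⟨9, by omega⟩ : Fin 12) = 9 := rfl
lemma fm10 : (⟨10, by omega⟩ : Fin 12) = 10 := rfl
lemma fm11 : (⟨11, by omega⟩ : Fin 12) = 11 := rfl

-- z-level rewriting lemmas
lemma zA1 : ∀ i j : ZMod (2*3), z (3*(i+j)) = z (3*i) * z (3*j) := by
  intro i j; rw [show 3*(i+j) = 3*i + 3*j from by ring, z_add]
lemma zA3 : ∀ i j : ZMod (2*3), z (-(i+j)) = z (-i) * z (-j) := by
  intro i j; rw [show -(i+j) = -i + -j from by ring, z_add]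
lemma zA4 : ∀ i j : ZMod (2*3), z (2*(i+j)) = z (2*i) * z (2*j) := by
  intro i j; rw [show 2*(i+j) = 2*i + 2*j from by ring, z_add]
lemma zA5 : ∀ i j : ZMod (2*3), z (-(2*(i+j))) = z (-(2*i)) * z (-(2*j)) := by
  intro i j; rw [show -(2*(i+j)) = -(2*i) + -(2*j) from by ring, z_add]
lemma h6 : (6 : ZMod (2*3)) = 0 := by decide
lemma zB1 : ∀ i j : ZMod (2*3), z (3*(j-i)) = z (3*i) * z (3*j) := by
  intro i j; rw [show 3*(j-i) = 3*i + 3*j from by linear_combination (-i) * h6, z_add]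
lemma zB2 : ∀ i j : ZMod (2*3), z (-(j-i)) = z i * z (-j) := by
  intro i j; rw [show -(j-i) = i + -j from by ring, z_add]
lemma zB3 : ∀ i j : ZMod (2*3), z (j-i) = z j * z (-i) := by
  intro i j; rw [show j-i = j + -i from by ring, z_add]
lemma zB4 : ∀ i j : ZMod (2*3), z (-(2*(j-i))) = z (2*i) * z (-(2*j)) := by
  intro i j; rw [show -(2*(j-i)) = 2*i + -(2*j) from by ring, z_add]
lemma zB5 : ∀ i j : ZMod (2*3), z (2*(j-i)) = z (2*j) * z (-(2*i)) := by
  intro i j; rw [show 2*(j-i) = 2*j + -(2*i) from by ring, z_add]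
lemma zD1 : ∀ i j : ZMod (2*3), z (3*(((3:ℕ) : ZMod (2*3)) + j - i)) = -(z (3*i) * z (3*j)) := by
  intro i j
  rw [show 3*(((3:ℕ) : ZMod (2*3)) + j - i) = 3 + (3*i + 3*j) from by push_cast; linear_combination (1-i) * h6, z_add, z_add, z_three]; ring
lemma zD2 : ∀ i j : ZMod (2*3), z (((3:ℕ) : ZMod (2*3)) + j - i) = -(z j * z (-i)) := by
  intro i j
  rw [show (((3:ℕ) : ZMod (2*3)) + j - i) = 3 + (j + -i) from by push_cast; ring, z_add, z_add,
    z_three]; ring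
lemma zD3 : ∀ i j : ZMod (2*3), z (-(((3:ℕ) : ZMod (2*3)) + j - i)) = -(z i * z (-j)) := by
  intro i j
  rw [show -(((3:ℕ) : ZMod (2*3)) + j - i) = 3 + (i + -j) from by push_cast; linear_combination (-1 : ZMod (2*3)) * h6, z_add, z_add,
    z_three]; ring
lemma zD4 : ∀ i j : ZMod (2*3), z (2*(((3:ℕ) : ZMod (2*3)) + j - i)) = z (2*j) * z (-(2*i)) := by
  intro i j
  rw [show 2*(((3:ℕ) : ZMod (2*3)) + j - i) = 2*j + -(2*i) from by push_cast; linear_combination h6, z_add]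
lemma zD5 : ∀ i j : ZMod (2*3), z (-(2*(((3:ℕ) : ZMod (2*3)) + j - i))) = z (2*i) * z (-(2*j)) := by
  intro i j
  rw [show -(2*(((3:ℕ) : ZMod (2*3)) + j - i)) = 2*i + -(2*j) from by push_cast; linear_combination (-1 : ZMod (2*3)) * h6, z_add]

lemma II1 (w u : ℂ) : (Complex.I * w) * (Complex.I * u) = -(w * u) := by
  linear_combination w * u * Complex.I_sq
lemma II2 (w u : ℂ) : (-(Complex.I * w)) * (-(Complex.I * u)) = -(w * u) := by
  linear_combination w * u * Complex.I_sq
lemma II1' (w u t : ℂ) : (Complex.I * w) * ((Complex.I * u) * t) = -(w * u * t) := by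
  linear_combination w * u * t * Complex.I_sq
lemma II2' (w u t : ℂ) : (-(Complex.I * w)) * (-(Complex.I * u) * t) = -(w * u * t) := by
  linear_combination w * u * t * Complex.I_sq

set_option maxHeartbeats 2000000 in
def ρQ : Representation ℂ (QuaternionGroup 3) (Fin 12 → ℂ) where
  toFun := ρmap
  map_one' := by
    refine LinearMap.ext fun v => funext fun k => ?_
    show ρmap (QuaternionGroup.a 0) v k = v k
    fin_cases k <;>
      simp only [ρmap_apply, ca0', ca0, cx0', cx0, sx0', sx0, ca1', ca1, cx1', cx1, sx1', sx1, ca2', ca2, cx2', cx2, sx2', sx2, ca3', ca3, cx3', cx3, sx3', sx3, ca4', ca4, cx4', cx4, sx4', sx4, ca5', ca5, cx5', cx5, sx5', sx5, ca6', ca6, cx6', cx6, sx6', sx6, ca7', ca7, cx7', cx7, sx7', sx7, ca8', ca8, cx8', cx8, sx8', sx8, ca9', ca9, cx9', cx9, sx9', sx9, ca10', ca10, cx10', cx10, sx10', sx10, ca11', ca11, cx11', cx11, sx11', sx11, fm0, fm1, fm2, fm3, fm4, fm5, fm6, fm7, fm8, fm9, fm10, fm11, sa, id_eq,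
        show ((3:ZMod (2*3)) * 0 : ZMod (2*3)) = 0 by decide,
        show ((2:ZMod (2*3)) * 0 : ZMod (2*3)) = 0 by decide,
        show (-(0:ZMod (2*3)) : ZMod (2*3)) = 0 by decide, z_zero, one_mul,
        Module.End.one_apply]
  map_mul' := by
    rintro (i | i) (j | j) <;>
      refine LinearMap.ext fun v => funext fun k => ?_ <;>
      simp only [a_mul_a, a_mul_xa, xa_mul_a, xa_mul_xa, Module.End.mul_apply]
    · fin_cases k <;>
        simp only [ρmap_apply, ca0', ca0, cx0', cx0, sx0', sx0, ca1', ca1, cx1', cx1, sx1', sx1, ca2', ca2, cx2', cx2, sx2', sx2, ca3', ca3, cx3', cx3, sx3', sx3, ca4', ca4, cx4', cx4, sx4', sx4, ca5', ca5, cx5', cx5, sx5', sx5, ca6', ca6, cx6', cx6, sx6', sx6, ca7', ca7, cx7', cx7, sx7', sx7, ca8', ca8, cx8', cx8, sx8', sx8, ca9', ca9, cx9', cx9, sx9', sx9, ca10', ca10, cx10', cx10, sx10', sx10, ca11', ca11, cx11', cx11, sx11', sx11, fm0, fm1, fm2, fm3, fm4, fm5, fm6, fm7, fm8, fm9, fm10,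 fm11, sa, id_eq, zA1, zA3, zA4, zA5, z_add] <;> ring
    · fin_cases k <;>
        simp only [ρmap_apply, ca0', ca0, cx0', cx0, sx0', sx0, ca1', ca1, cx1', cx1, sx1', sx1, ca2', ca2, cx2', cx2, sx2', sx2, ca3', ca3, cx3', cx3, sx3', sx3, ca4', ca4, cx4', cx4, sx4', sx4, ca5', ca5, cx5', cx5, sx5', sx5, ca6', ca6, cx6', cx6, sx6', sx6, ca7', ca7, cx7', cx7, sx7', sx7, ca8', ca8, cx8', cx8, sx8', sx8, ca9', ca9, cx9', cx9, sx9', sx9, ca10', ca10, cx10', cx10, sx10', sx10, ca11', ca11, cx11', cx11, sx11', sx11, fm0, fm1, fm2, fm3, fm4, fm5, fm6, fm7, fm8, fm9, fm10, fm11, sa, id_eq, zB1, zB2, zB3, zB4, zB5,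
          Complex.I_mul_I] <;> ring
    · fin_cases k <;>
        simp only [ρmap_apply, ca0', ca0, cx0', cx0, sx0', sx0, ca1', ca1, cx1', cx1, sx1', sx1, ca2', ca2, cx2', cx2, sx2', sx2, ca3', ca3, cx3', cx3, sx3', sx3, ca4', ca4, cx4', cx4, sx4', sx4, ca5', ca5, cx5', cx5, sx5', sx5, ca6', ca6, cx6', cx6, sx6', sx6, ca7', ca7, cx7', cx7, sx7', sx7, ca8', ca8, cx8', cx8, sx8', sx8, ca9', ca9, cx9', cx9, sx9', sx9, ca10', ca10, cx10', cx10, sx10', sx10, ca11', ca11, cx11', cx11, sx11', sx11, fm0, fm1, fm2, fm3, fm4, fm5, fm6, fm7, fm8, fm9, fm10, fm11, sa, id_eq, zA1, zA3, zA4, zA5, z_add] <;> ring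
    · fin_cases k <;>
        simp only [ρmap_apply, ca0', ca0, cx0', cx0, sx0', sx0, ca1', ca1, cx1', cx1, sx1', sx1, ca2', ca2, cx2', cx2, sx2', sx2, ca3', ca3, cx3', cx3, sx3', sx3, ca4', ca4, cx4', cx4, sx4', sx4, ca5', ca5, cx5', cx5, sx5', sx5, ca6', ca6, cx6', cx6, sx6', sx6, ca7', ca7, cx7', cx7, sx7', sx7, ca8', ca8, cx8', cx8, sx8', sx8, ca9', ca9, cx9', cx9, sx9', sx9, ca10', ca10, cx10', cx10, sx10', sx10, ca11', ca11, cx11', cx11, sx11', sx11, fm0, fm1, fm2, fm3, fm4, fm5, fm6, fm7, fm8, fm9, fm10, fm11, sa, id_eq, zD1, zD2, zD3, zD4, zD5,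
          II1, II2, II1', II2'] <;> ring

lemma ρQ_apply (g : QuaternionGroup 3) : ρQ g = ρmap g := rfl

-- trace
lemma trace_mono (c : Fin 12 → ℂ) (s : Fin 12 → Fin 12) :
    LinearMap.trace ℂ (Fin 12 → ℂ) (mono c s) = ∑ k : Fin 12, c k * Pi.single (M := fun _ => ℂ) k 1 (s k) := by
  rw [LinearMap.trace_eq_matrix_trace ℂ (Pi.basisFun ℂ (Fin 12))]
  rw [Matrix.trace]
  refine Finset.sum_congr rfl fun k _ => ?_
  rw [Matrix.diag_apply, LinearMap.toMatrix_apply, Pi.basisFun_apply, Pi.basisFun_repr]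
  rfl

lemma fc1 : (0 : Fin 11).succ = (1 : Fin 12) := rfl
lemma fc2 : (0 : Fin 10).succ.succ = (2 : Fin 12) := rfl
lemma fc3 : (0 : Fin 9).succ.succ.succ = (3 : Fin 12) := rfl
lemma fc4 : (0 : Fin 8).succ.succ.succ.succ = (4 : Fin 12) := rfl
lemma fc5 : (0 : Fin 7).succ.succ.succ.succ.succ = (5 : Fin 12) := rfl
lemma fc6 : (0 : Fin 6).succ.succ.succ.succ.succ.succ = (6 : Fin 12) := rfl
lemma fc7 : (0 : Fin 5).succ.succ.succ.succ.succ.succ.succ = (7 : Fin 12) := rfl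
lemma fc8 : (0 : Fin 4).succ.succ.succ.succ.succ.succ.succ.succ = (8 : Fin 12) := rfl
lemma fc9 : (0 : Fin 3).succ.succ.succ.succ.succ.succ.succ.succ.succ = (9 : Fin 12) := rfl
lemma fc10 : (0 : Fin 2).succ.succ.succ.succ.succ.succ.succ.succ.succ.succ = (10 : Fin 12) := rfl
lemma fc11 : (0 : Fin 1).succ.succ.succ.succ.succ.succ.succ.succ.succ.succ.succ = (11 : Fin 12) := rfl

lemma trace_a (i : ZMod (2*3)) :
    LinearMap.trace ℂ (Fin 12 → ℂ) (ρmap (.a i)) =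
      4 + 2 * z (3*i) + z i + z (-i) + 2 * z (2*i) + 2 * z (-(2*i)) := by
  rw [ρmap, trace_mono]
  rw [Fin.sum_univ_succ, Fin.sum_univ_succ, Fin.sum_univ_succ, Fin.sum_univ_succ,
    Fin.sum_univ_succ, Fin.sum_univ_succ, Fin.sum_univ_succ, Fin.sum_univ_succ,
    Fin.sum_univ_succ, Fin.sum_univ_succ, Fin.sum_univ_succ, Fin.sum_univ_one]
  simp only [fc1, fc2, fc3, fc4, fc5, fc6, fc7, fc8, fc9, fc10, fc11, ca0', ca0, cx0', cx0, sx0', sx0, ca1', ca1, cx1', cx1, sx1', sx1, ca2', ca2, cx2', cx2, sx2', sx2, ca3', ca3, cx3', cx3, sx3', sx3, ca4', ca4, cx4', cx4, sx4', sx4, ca5', ca5, cx5', cx5, sx5', sx5, ca6', ca6, cx6', cx6, sx6', sx6, ca7', ca7, cx7', cx7, sx7', sx7, ca8', ca8, cx8', cx8, sx8', sx8, ca9', ca9, cx9', cx9, sx9', sx9, ca10', ca10, cx10', cx10, sx10', sx10, ca11', ca11, cx11', cx11, sx11', sx11, fm0, fm1, fm2, fm3, fm4, fm5, fm6, fm7,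 fm8, fm9, fm10, fm11, sa, id_eq, Pi.single_eq_same]
  ring

lemma trace_xa (i : ZMod (2*3)) :
    LinearMap.trace ℂ (Fin 12 → ℂ) (ρmap (.xa i)) = 4 := by
  rw [ρmap, trace_mono]
  rw [Fin.sum_univ_succ, Fin.sum_univ_succ, Fin.sum_univ_succ, Fin.sum_univ_succ,
    Fin.sum_univ_succ, Fin.sum_univ_succ, Fin.sum_univ_succ, Fin.sum_univ_succ,
    Fin.sum_univ_succ, Fin.sum_univ_succ, Fin.sum_univ_succ, Fin.sum_univ_one]
  simp only [fc1, fc2, fc3, fc4, fc5, fc6, fc7, fc8, fc9, fc10, fc11, ca0', ca0, cx0', cx0, sx0', sx0, ca1', ca1, cx1', cx1, sx1', sx1, ca2', ca2, cx2', cx2, sx2', sx2, ca3', ca3, cx3', cx3, sx3', sx3, ca4', ca4, cx4', cx4, sx4', sx4, ca5', ca5, cx5', cx5, sx5', sx5, ca6', ca6, cx6', cx6, sx6', sx6, ca7', ca7, cx7', cx7, sx7', sx7, ca8', ca8, cx8', cx8, sx8', sx8, ca9', ca9, cx9', cx9, sx9', sx9, ca10', ca10, cx10', cx10, sx10', sx10,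 ca11', ca11, cx11', cx11, sx11', sx11, fm0, fm1, fm2, fm3, fm4, fm5, fm6, fm7, fm8, fm9, fm10, fm11, Pi.single_eq_same]
  rw [Pi.single_eq_of_ne (by decide : (7:Fin 12) ≠ 6), Pi.single_eq_of_ne (by decide : (6:Fin 12) ≠ 7),
    Pi.single_eq_of_ne (by decide : (9:Fin 12) ≠ 8), Pi.single_eq_of_ne (by decide : (8:Fin 12) ≠ 9),
    Pi.single_eq_of_ne (by decide : (11:Fin 12) ≠ 10), Pi.single_eq_of_ne (by decide : (10:Fin 12) ≠ 11)]
  ring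

-- invariants
def pad : (Fin 4 → ℂ) →ₗ[ℂ] (Fin 12 → ℂ) where
  toFun w := fun k => if h : (k:ℕ) < 4 then w ⟨k.1, h⟩ else 0
  map_add' u v := by funext k; by_cases h : (k:ℕ) < 4 <;> simp [h]
  map_smul' r v := by funext k; by_cases h : (k:ℕ) < 4 <;> simp [h]

lemma pd0 (w : Fin 4 → ℂ) : pad w 0 = w 0 := rfl
lemma pd0' (w : Fin 4 → ℂ) : pad w ⟨0, by omega⟩ = w 0 := rfl
lemma pd1 (w : Fin 4 → ℂ) : pad w 1 = w 1 := rfl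
lemma pd1' (w : Fin 4 → ℂ) : pad w ⟨1, by omega⟩ = w 1 := rfl
lemma pd2 (w : Fin 4 → ℂ) : pad w 2 = w 2 := rfl
lemma pd2' (w : Fin 4 → ℂ) : pad w ⟨2, by omega⟩ = w 2 := rfl
lemma pd3 (w : Fin 4 → ℂ) : pad w 3 = w 3 := rfl
lemma pd3' (w : Fin 4 → ℂ) : pad w ⟨3, by omega⟩ = w 3 := rfl
lemma pd4 (w : Fin 4 → ℂ) : pad w 4 = 0 := rfl
lemma pd4' (w : Fin 4 → ℂ) : pad w ⟨4, by omega⟩ = 0 := rfl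
lemma pd5 (w : Fin 4 → ℂ) : pad w 5 = 0 := rfl
lemma pd5' (w : Fin 4 → ℂ) : pad w ⟨5, by omega⟩ = 0 := rfl
lemma pd6 (w : Fin 4 → ℂ) : pad w 6 = 0 := rfl
lemma pd6' (w : Fin 4 → ℂ) : pad w ⟨6, by omega⟩ = 0 := rfl
lemma pd7 (w : Fin 4 → ℂ) : pad w 7 = 0 := rfl
lemma pd7' (w : Fin 4 → ℂ) : pad w ⟨7, by omega⟩ = 0 := rfl
lemma pd8 (w : Fin 4 → ℂ) : pad w 8 = 0 := rfl
lemma pd8' (w : Fin 4 → ℂ) : pad w ⟨8, by omega⟩ = 0 := rfl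
lemma pd9 (w : Fin 4 → ℂ) : pad w 9 = 0 := rfl
lemma pd9' (w : Fin 4 → ℂ) : pad w ⟨9, by omega⟩ = 0 := rfl
lemma pd10 (w : Fin 4 → ℂ) : pad w 10 = 0 := rfl
lemma pd10' (w : Fin 4 → ℂ) : pad w ⟨10, by omega⟩ = 0 := rfl
lemma pd11 (w : Fin 4 → ℂ) : pad w 11 = 0 := rfl
lemma pd11' (w : Fin 4 → ℂ) : pad w ⟨11, by omega⟩ = 0 := rfl

lemma pad_mem (w : Fin 4 → ℂ) : pad w ∈ ρQ.invariants := by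
  rw [Representation.mem_invariants]
  rintro (i | i) <;> refine funext fun k => ?_ <;> rw [ρQ_apply, ρmap_apply] <;>
    fin_cases k <;>
    simp only [ca0', ca0, cx0', cx0, sx0', sx0, ca1', ca1, cx1', cx1, sx1', sx1, ca2', ca2, cx2', cx2, sx2', sx2, ca3', ca3, cx3', cx3, sx3', sx3, ca4', ca4, cx4', cx4, sx4', sx4, ca5', ca5, cx5', cx5, sx5', sx5, ca6', ca6, cx6', cx6, sx6', sx6, ca7', ca7, cx7', cx7, sx7', sx7, ca8', ca8, cx8', cx8, sx8', sx8, ca9', ca9, cx9', cx9, sx9', sx9, ca10', ca10, cx10', cx10, sx10', sx10, ca11', ca11, cx11', cx11, sx11', sx11, fm0, fm1, fm2, fm3, fm4, fm5, fm6, fm7, fm8, fm9, fm10, fm11, pd0, pd1, pd2, pd3, pd4, pd5, pd6, pd7, pd8, pd9, pd10, pd11, pd0', pd1', pd2', pd3', pd4', pd5', pd6', pd7', pd8', pd9', pd10', pd11', sa, id_eq, one_mul, mul_zero]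

lemma z_one : z 1 = ζ := by
  show ζ ^ (1 : ZMod (2*3)).val = ζ
  rw [show (1 : ZMod (2*3)).val = 1 from rfl, pow_one]
lemma z_two : z 2 = ζ^2 := by
  show ζ ^ (2 : ZMod (2*3)).val = ζ^2
  rw [show (2 : ZMod (2*3)).val = 2 from rfl]
lemma z_four : z 4 = ζ^4 := by
  show ζ ^ (4 : ZMod (2*3)).val = ζ^4
  rw [show (4 : ZMod (2*3)).val = 4 from rfl]
lemma z_five : z 5 = ζ^5 := by
  show ζ ^ (5 : ZMod (2*3)).val = ζ^5
  rw [show (5 : ZMod (2*3)).val = 5 from rfl]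

lemma eig_zero {c x : ℂ} (h : c * x = x) (hc : c ≠ 1) : x = 0 := by
  have h2 : (c - 1) * x = 0 := by linear_combination h
  rcases mul_eq_zero.mp h2 with h3 | h3
  · exact absurd (by linear_combination h3) hc
  · exact h3


lemma inv_vanish {v : Fin 12 → ℂ} (hv : v ∈ ρQ.invariants) :
    ∀ k : Fin 12, ¬ ((k:ℕ) < 4) → v k = 0 := by
  have h := (Representation.mem_invariants ρQ v).mp hv (.a 1)
  rw [ρQ_apply] at h
  intro k hk
  have hkk := congrFun h k
  rw [ρmap_apply, sa, id_eq] at hkk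
  fin_cases k <;> simp only [ca4, ca5, ca6, ca7, ca8, ca9, ca10, ca11,
      ca4', ca5', ca6', ca7', ca8', ca9', ca10', ca11'] at hkk hk ⊢ <;>
    [skip; skip; skip; skip; skip; skip; skip; skip; skip; skip; skip; skip] <;>
    first
      | (refine (hk ?_).elim; omega)
      | (refine eig_zero hkk ?_
         simp only [show ((3:ZMod (2*3)) * 1 : ZMod (2*3)) = 3 from by decide,
           show ((2:ZMod (2*3)) * 1 : ZMod (2*3)) = 2 from by decide,
           show (-(1:ZMod (2*3)) : ZMod (2*3)) = 5 from by decide,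
           show (-((2:ZMod (2*3)) * 1) : ZMod (2*3)) = 4 from by decide,
           z_three, z_one, z_two, z_four, z_five]
         first
           | exact zeta_ne_one
           | exact zeta2_ne_one
           | exact zeta4_ne_one
           | exact zeta5_ne_one
           | norm_num)

def padInv : (Fin 4 → ℂ) →ₗ[ℂ] ρQ.invariants := LinearMap.codRestrict _ pad pad_mem

lemma padInv_bij : Function.Bijective padInv := by
  constructor
  · intro w1 w2 h
    funext j
    have := congrFun (congrArg Subtype.val h) ⟨j.1, by omega⟩
    show w1 j = w2 j
    simpa [padInv, pad, Fin.eta] using this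
  · rintro ⟨v, hv⟩
    refine ⟨fun j => v ⟨j.1, by omega⟩, Subtype.ext ?_⟩
    show pad _ = v
    funext k
    by_cases hk : (k:ℕ) < 4
    · show dite _ _ _ = v k
      rw [dif_pos hk]
    · show dite _ _ _ = v k
      rw [dif_neg hk, (inv_vanish hv k hk)]

lemma finrank_invariants : Module.finrank ℂ ρQ.invariants = 4 := by
  have e : (Fin 4 → ℂ) ≃ₗ[ℂ] ρQ.invariants := LinearEquiv.ofBijective padInv padInv_bij
  rw [← e.finrank_eq, Module.finrank_fin_fun]


open QuaternionGroup in
lemma zmod_cases : ∀ i : ZMod (2*3), i = 0 ∨ i = 1 ∨ i = 2 ∨ i = 3 ∨ i = 4 ∨ i = 5 := by decide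

open QuaternionGroup in
lemma ord_a0 : orderOf (a (0:ZMod (2*3)) : QuaternionGroup 3) = 1 := by
  rw [QuaternionGroup.orderOf_a]; rfl
open QuaternionGroup in
lemma ord_a1 : orderOf (a (1:ZMod (2*3)) : QuaternionGroup 3) = 6 := by
  rw [QuaternionGroup.orderOf_a]; rfl
open QuaternionGroup in
lemma ord_a2 : orderOf (a (2:ZMod (2*3)) : QuaternionGroup 3) = 3 := by
  rw [QuaternionGroup.orderOf_a]; rfl
open QuaternionGroup in
lemma ord_a3 : orderOf (a (3:ZMod (2*3)) : QuaternionGroup 3) = 2 := by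
  rw [QuaternionGroup.orderOf_a]; rfl
open QuaternionGroup in
lemma ord_a4 : orderOf (a (4:ZMod (2*3)) : QuaternionGroup 3) = 3 := by
  rw [QuaternionGroup.orderOf_a]; rfl
open QuaternionGroup in
lemma ord_a5 : orderOf (a (5:ZMod (2*3)) : QuaternionGroup 3) = 6 := by
  rw [QuaternionGroup.orderOf_a]; rfl

lemma arg30 : ((3:ZMod (2*3)) * 0 : ZMod (2*3)) = 0 := by decide
lemma arg31 : ((3:ZMod (2*3)) * 1 : ZMod (2*3)) = 3 := by decide
lemma arg32 : ((3:ZMod (2*3)) * 2 : ZMod (2*3)) = 0 := by decide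
lemma arg33 : ((3:ZMod (2*3)) * 3 : ZMod (2*3)) = 3 := by decide
lemma arg34 : ((3:ZMod (2*3)) * 4 : ZMod (2*3)) = 0 := by decide
lemma arg35 : ((3:ZMod (2*3)) * 5 : ZMod (2*3)) = 3 := by decide
lemma arg20 : ((2:ZMod (2*3)) * 0 : ZMod (2*3)) = 0 := by decide
lemma arg21 : ((2:ZMod (2*3)) * 1 : ZMod (2*3)) = 2 := by decide
lemma arg22 : ((2:ZMod (2*3)) * 2 : ZMod (2*3)) = 4 := by decide
lemma arg23 : ((2:ZMod (2*3)) * 3 : ZMod (2*3)) = 0 := by decide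
lemma arg24 : ((2:ZMod (2*3)) * 4 : ZMod (2*3)) = 2 := by decide
lemma arg25 : ((2:ZMod (2*3)) * 5 : ZMod (2*3)) = 4 := by decide
lemma argn0 : (-(0:ZMod (2*3)) : ZMod (2*3)) = 0 := by decide
lemma argn1 : (-(1:ZMod (2*3)) : ZMod (2*3)) = 5 := by decide
lemma argn2 : (-(2:ZMod (2*3)) : ZMod (2*3)) = 4 := by decide
lemma argn3 : (-(3:ZMod (2*3)) : ZMod (2*3)) = 3 := by decide
lemma argn4 : (-(4:ZMod (2*3)) : ZMod (2*3)) = 2 := by decide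
lemma argn5 : (-(5:ZMod (2*3)) : ZMod (2*3)) = 1 := by decide

end Q12aux

open Q12aux in
/-- The dicyclic group `Q₁₂` (realized in Mathlib as `QuaternionGroup 3`) admits a small Mathieu
representation whose invariant subspace is 4-dimensional. -/
theorem Q12_has_small_mathieu_rep :
    ∃ (V : Type) (_ : AddCommGroup V) (_ : Module ℂ V)
      (ρ : Representation ℂ (QuaternionGroup 3) V),
        IsSmallMathieuRep ρ ∧ Module.finrank ℂ ρ.invariants = 4 := by
  refine ⟨Fin 12 → ℂ, inferInstance, inferInstance, ρQ, ⟨?_, ?_, ?_⟩, finrank_invariants⟩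
  · exact Module.finrank_fin_fun ℂ
  · rintro (i | i)
    · rcases zmod_cases i with rfl | rfl | rfl | rfl | rfl | rfl <;>
        simp only [ord_a0, ord_a1, ord_a2, ord_a3, ord_a4, ord_a5] <;>
        norm_num [Set.mem_insert_iff]
    · rw [QuaternionGroup.orderOf_xa]
      norm_num [Set.mem_insert_iff]
  · rintro (i | i)
    · rcases zmod_cases i with rfl | rfl | rfl | rfl | rfl | rfl
      · rw [ρQ_apply, trace_a, ord_a0]
        simp only [arg30, arg20, argn0, z_zero, mathieuCharValue]
        norm_num
      · rw [ρQ_apply, trace_a, ord_a1]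
        simp only [arg31, arg21, argn1, argn2, z_three, z_one, z_two, z_four, z_five,
          mathieuCharValue]
        rw [hζ5, hζ4, hζ2]; ring
      · rw [ρQ_apply, trace_a, ord_a2]
        simp only [arg32, arg22, argn2, argn4, z_zero, z_two, z_four, mathieuCharValue]
        rw [hζ4, hζ2]; ring
      · rw [ρQ_apply, trace_a, ord_a3]
        simp only [arg33, arg23, argn3, argn0, z_zero, z_three, mathieuCharValue]
        norm_num
      · rw [ρQ_apply, trace_a, ord_a4]
        simp only [arg34, arg24, argn4, argn2, z_zero, z_two, z_four, mathieuCharValue]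
        rw [hζ4, hζ2]; ring
      · rw [ρQ_apply, trace_a, ord_a5]
        simp only [arg35, arg25, argn5, argn2, argn4, z_three, z_one, z_two, z_four, z_five,
          mathieuCharValue]
        rw [hζ5, hζ4, hζ2]; ring
    · rw [ρQ_apply, trace_xa, QuaternionGroup.orderOf_xa]
      rfl

end
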